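/- arXiv:math/0011066 — 7 statements merged into one kernel-verified Lean document; each statement's English description precedes it below -/
import Mathlib

section
/- For every rational α such that the curve is nonsingular, the point (0, 0) on the curve Y² + (1−α)XY − αY = X³ − αX² has order exactly 5. -/
open WeierstrassCurve.Affine

lemma some_congr {F : Type*} [Field F] {W : WeierstrassCurve.Affine F}
    {x₁ y₁ x₂ y₂ : F} (hx : x₁ = x₂) (hy : y₁ = y₂)
    (h₁ : W.Nonsingular x₁ y₁) (h₂ : W.Nonsingular x₂ y₂) :
    WeierstrassCurve.Affine.Point.some _ _ h₁ = WeierstrassCurve.Affine.Point.some _ _ h₂ := by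
  subst hx; subst hy; rfl

/-- For rational `α` with the Tate normal form `Y² + (1−α)XY − αY = X³ − αX²`
nonsingular, the point `(0, 0)` has order exactly 5. -/
theorem tate_order_five (α : ℚ)
    (W : WeierstrassCurve.Affine ℚ)
    (hW : W = { a₁ := 1 - α, a₂ := -α, a₃ := -α, a₄ := 0, a₆ := 0 })
    (hΔ : W.Δ ≠ 0) :
    ∃ h : W.Nonsingular 0 0,
      addOrderOf (WeierstrassCurve.Affine.Point.some 0 0 h) = 5 := by
  subst hW
  set W : WeierstrassCurve.Affine ℚ :=
    { a₁ := 1 - α, a₂ := -α, a₃ := -α, a₄ := 0, a₆ := 0 } with hWdef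
  have hα : α ≠ 0 := by
    intro h
    apply hΔ
    subst h
    simp [hWdef, WeierstrassCurve.Δ, WeierstrassCurve.b₂, WeierstrassCurve.b₄,
      WeierstrassCurve.b₆, WeierstrassCurve.b₈]
  -- equations
  have hE0 : W.Equation 0 0 := by rw [equation_iff]; simp [hWdef]
  have hE2 : W.Equation α (α ^ 2) := by rw [equation_iff]; simp [hWdef]; ring
  have hE3 : W.Equation α 0 := by rw [equation_iff]; simp [hWdef]; ring
  have hE4 : W.Equation 0 α := by rw [equation_iff]; simp [hWdef]; ring
  have h0 : W.Nonsingular 0 0 := (equation_iff_nonsingular_of_Δ_ne_zero hΔ).mp hE0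
  have h2 : W.Nonsingular α (α ^ 2) := (equation_iff_nonsingular_of_Δ_ne_zero hΔ).mp hE2
  have h3 : W.Nonsingular α 0 := (equation_iff_nonsingular_of_Δ_ne_zero hΔ).mp hE3
  have h4 : W.Nonsingular 0 α := (equation_iff_nonsingular_of_Δ_ne_zero hΔ).mp hE4
  refine ⟨h0, ?_⟩
  set P := WeierstrassCurve.Affine.Point.some _ _ h0 with hP
  set Q := WeierstrassCurve.Affine.Point.some _ _ h2 with hQ
  set R := WeierstrassCurve.Affine.Point.some _ _ h3 with hR
  set S := WeierstrassCurve.Affine.Point.some _ _ h4 with hS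
  have hneg00 : W.negY 0 0 = α := by simp [negY, hWdef]
  -- P + P = Q
  have hPP : P + P = Q := by
    have hy : (0 : ℚ) ≠ W.negY 0 0 := by rw [hneg00]; exact (Ne.symm hα)
    rw [hP, Point.add_of_Y_ne hy, hQ]
    have hslope : W.slope 0 0 0 0 = 0 := by
      rw [slope_of_Y_ne rfl hy]
      simp [hWdef, negY]
    apply some_congr <;> (simp only [hslope]; simp [addX, addY, negAddY, negY, hWdef]; try ring)
  -- Q + P = R
  have hQP : Q + P = R := by
    have hx : α ≠ (0 : ℚ) := hα
    rw [hQ, hP, Point.add_of_X_ne hx, hR]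
    have hslope : W.slope α 0 (α ^ 2) 0 = α := by
      rw [slope_of_X_ne hx]
      field_simp
      ring
    apply some_congr <;>
      · simp only [hslope]; simp only [addX, addY, negAddY, negY, hWdef]
        ring
  -- R + P = S
  have hRP : R + P = S := by
    have hx : α ≠ (0 : ℚ) := hα
    rw [hR, hP, Point.add_of_X_ne hx, hS]
    have hslope : W.slope α 0 0 0 = 0 := by
      rw [slope_of_X_ne hx]; simp
    apply some_congr <;>
      · simp only [hslope]; simp only [addX, addY, negAddY, negY, hWdef]
        ring
  -- S + P = 0
  have hSP : S + P = 0 := by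
    rw [hS, hP]
    exact Point.add_of_Y_eq rfl (by rw [hneg00])
  have h5 : (5 : ℕ) • P = 0 := by
    have : P + P + P + P + P = 0 := by rw [hPP, hQP, hRP, hSP]
    calc (5 : ℕ) • P = P + P + P + P + P := by abel
    _ = 0 := this
  have hPne : P ≠ 0 := by
    rw [hP]
    exact fun h => Point.some_ne_zero h0 h
  haveI : Fact (Nat.Prime 5) := ⟨by norm_num⟩
  exact addOrderOf_eq_prime h5 hPne
end

section
/- For every rational α such that the curve is nonsingular, the point (0, 0) on the curve Y² + (1−α)XY − (α+α²)Y = X³ − (α+α²)X² has order exactly 6. -/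
open WeierstrassCurve.Affine WeierstrassCurve.Affine.Point

private lemma point_some_eq {F : Type*} [Field F] {W : WeierstrassCurve.Affine F}
    {x₁ y₁ x₂ y₂ : F} (h₁ : W.Nonsingular x₁ y₁) (hx : x₁ = x₂) (hy : y₁ = y₂)
    (h₂ : W.Nonsingular x₂ y₂) :
    WeierstrassCurve.Affine.Point.some x₁ y₁ h₁ = WeierstrassCurve.Affine.Point.some x₂ y₂ h₂ := by
  subst hx; subst hy; rfl

/-- For rational `α` with the Tate normal form `Y² + (1−α)XY − (α+α²)Y = X³ − (α+α²)X²`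
nonsingular, the point `(0, 0)` has order exactly 6. -/
theorem tate_order_six (α : ℚ)
    (W : WeierstrassCurve.Affine ℚ)
    (hW : W = { a₁ := 1 - α, a₂ := -(α + α ^ 2), a₃ := -(α + α ^ 2), a₄ := 0, a₆ := 0 })
    (hΔ : W.Δ ≠ 0) :
    ∃ h : W.Nonsingular 0 0,
      addOrderOf (WeierstrassCurve.Affine.Point.some 0 0 h) = 6 := by
  subst hW
  set W : WeierstrassCurve.Affine ℚ :=
    { a₁ := 1 - α, a₂ := -(α + α ^ 2), a₃ := -(α + α ^ 2), a₄ := 0, a₆ := 0 } with hWdef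
  have ha₁ : W.a₁ = 1 - α := rfl
  have ha₂ : W.a₂ = -(α + α ^ 2) := rfl
  have ha₃ : W.a₃ = -(α + α ^ 2) := rfl
  have ha₄ : W.a₄ = 0 := rfl
  have ha₆ : W.a₆ = 0 := rfl
  have hb : α + α ^ 2 ≠ 0 := by
    intro h
    apply hΔ
    have h' : α * (1 + α) = 0 := by linear_combination h
    rcases mul_eq_zero.mp h' with h0 | h1
    · simp [hWdef, WeierstrassCurve.Δ, WeierstrassCurve.b₂, WeierstrassCurve.b₄,
        WeierstrassCurve.b₆, WeierstrassCurve.b₈, h0]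
    · have h0 : α = -1 := by linarith
      simp [hWdef, WeierstrassCurve.Δ, WeierstrassCurve.b₂, WeierstrassCurve.b₄,
        WeierstrassCurve.b₆, WeierstrassCurve.b₈, h0]
  have hα : α ≠ 0 := by
    intro h0
    exact hb (by rw [h0]; ring)
  have hP : W.Nonsingular 0 0 := by
    rw [nonsingular_iff, equation_iff, ha₁, ha₂, ha₃, ha₄, ha₆]
    refine ⟨by ring, Or.inr fun h => hb ?_⟩
    linear_combination -h
  -- 2P = (b, b*α) where b = α + α²
  have hQ : W.Nonsingular (α + α ^ 2) ((α + α ^ 2) * α) := by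
    rw [nonsingular_iff, equation_iff, ha₁, ha₂, ha₃, ha₄, ha₆]
    refine ⟨by ring, Or.inr fun h => ?_⟩
    have h2 : α * (α + α ^ 2) = 0 := by linear_combination h
    rcases mul_eq_zero.mp h2 with h0 | h0
    · exact hα h0
    · exact hb h0
  -- 3P = (α, α²)
  have hR : W.Nonsingular α (α ^ 2) := by
    rw [nonsingular_iff, equation_iff, ha₁, ha₂, ha₃, ha₄, ha₆]
    refine ⟨by ring, Or.inl fun h => hα ?_⟩
    have h3 : α ^ 3 = 0 := by linear_combination h
    exact pow_eq_zero_iff (n := 3) (by norm_num) |>.mp h3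
  have hy0 : (0 : ℚ) ≠ W.negY 0 0 := by
    simp only [negY, ha₁, ha₃]
    intro h
    apply hb
    linear_combination -h
  have hL1 : W.slope 0 0 0 0 = 0 := by
    rw [slope_of_Y_ne rfl hy0, ha₁, ha₂, ha₄]
    norm_num
  have h2P : some _ _ hP + some _ _ hP = some _ _ hQ := by
    rw [add_self_of_Y_ne hy0]
    refine point_some_eq _ ?_ ?_ hQ
    · simp only [addX, negAddY, addY, negY, hL1, ha₁, ha₂, ha₃, ha₄]; ring
    · simp only [addX, negAddY, addY, negY, hL1, ha₁, ha₂, ha₃, ha₄]; ring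
  have hx12 : (α + α ^ 2) ≠ (0 : ℚ) := hb
  have hL2 : W.slope (α + α ^ 2) 0 ((α + α ^ 2) * α) 0 = α := by
    rw [slope_of_X_ne hx12]
    rw [div_eq_iff (sub_ne_zero.mpr hx12)]
    ring
  have h3P : some _ _ hQ + some _ _ hP = some _ _ hR := by
    rw [add_of_X_ne hx12]
    refine point_some_eq _ ?_ ?_ hR
    · simp only [addX, negAddY, addY, negY, hL2, ha₁, ha₂, ha₃, ha₄]; ring
    · simp only [addX, negAddY, addY, negY, hL2, ha₁, ha₂, ha₃, ha₄]; ring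
  have hRR : some _ _ hR + some _ _ hR = (0 : W.Point) := by
    apply add_self_of_Y_eq
    simp only [negY, ha₁, ha₃]
    ring
  refine ⟨hP, ?_⟩
  have e2 : (2 : ℕ) • some _ _ hP = some _ _ hQ := by rw [two_nsmul]; exact h2P
  have e3 : (3 : ℕ) • some _ _ hP = some _ _ hR := by
    rw [show (3 : ℕ) = 2 + 1 from rfl, add_nsmul, one_nsmul, e2]
    exact h3P
  have e6 : (6 : ℕ) • some _ _ hP = (0 : W.Point) := by
    rw [show (6 : ℕ) = 3 + 3 from rfl, add_nsmul, e3]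
    exact hRR
  have h6 : addOrderOf (some _ _ hP) ∣ 6 := addOrderOf_dvd_of_nsmul_eq_zero e6
  have hne1 : addOrderOf (some _ _ hP) ≠ 1 := by
    intro h
    exact some_ne_zero hP (AddMonoid.addOrderOf_eq_one_iff.mp h)
  have hne2 : addOrderOf (some _ _ hP) ≠ 2 := by
    intro h
    exact some_ne_zero hQ (by rw [← e2, ← h]; exact addOrderOf_nsmul_eq_zero (some _ _ hP))
  have hne3 : addOrderOf (some _ _ hP) ≠ 3 := by
    intro h
    exact some_ne_zero hR (by rw [← e3, ← h]; exact addOrderOf_nsmul_eq_zero (some _ _ hP))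
  have hle : addOrderOf (some _ _ hP) ≤ 6 := Nat.le_of_dvd (by norm_num) h6
  generalize hn : addOrderOf (some _ _ hP) = n at h6 hne1 hne2 hne3 hle ⊢
  interval_cases n
  · exact absurd h6 (by norm_num)
  · exact absurd rfl hne1
  · exact absurd rfl hne2
  · exact absurd rfl hne3
  · exact absurd h6 (by norm_num)
  · exact absurd h6 (by norm_num)
  · rfl
end

section
/- For every rational α such that the curve is nonsingular, the point (0, 0) on the curve Y² + (1−(α²−α))XY − (α³−α²)Y = X³ − (α³−α²)X² has order exactly 7. -/
namespace TateAux

open WeierstrassCurve.Affine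

lemma some_congr {F : Type*} [Field F] {W : WeierstrassCurve.Affine F} {x₁ y₁ x₂ y₂ : F}
    (h₁ : W.Nonsingular x₁ y₁) (h₂ : W.Nonsingular x₂ y₂) (hx : x₁ = x₂) (hy : y₁ = y₂) :
    WeierstrassCurve.Affine.Point.some _ _ h₁ = WeierstrassCurve.Affine.Point.some _ _ h₂ := by subst hx; subst hy; rfl

end TateAux

/-- For rational `α` with the Tate normal form
`Y² + (1−(α²−α))XY − (α³−α²)Y = X³ − (α³−α²)X²` nonsingular, the point `(0, 0)` has
order exactly 7. -/
theorem tate_order_seven (α : ℚ)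
    (W : WeierstrassCurve.Affine ℚ)
    (hW : W = { a₁ := 1 - (α ^ 2 - α), a₂ := -(α ^ 3 - α ^ 2), a₃ := -(α ^ 3 - α ^ 2),
                a₄ := 0, a₆ := 0 })
    (hΔ : W.Δ ≠ 0) :
    ∃ h : W.Nonsingular 0 0,
      addOrderOf (WeierstrassCurve.Affine.Point.some _ _ h) = 7 := by
  subst hW
  set W : WeierstrassCurve.Affine ℚ :=
    { a₁ := 1 - (α ^ 2 - α), a₂ := -(α ^ 3 - α ^ 2), a₃ := -(α ^ 3 - α ^ 2),
      a₄ := 0, a₆ := 0 } with hWdef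
  -- basic nonvanishing
  have hΔfac : W.Δ = α ^ 7 * (α - 1) ^ 7 * (α ^ 3 - 8 * α ^ 2 + 5 * α + 1) := by
    simp only [hWdef, WeierstrassCurve.Δ, WeierstrassCurve.b₂, WeierstrassCurve.b₄,
      WeierstrassCurve.b₆, WeierstrassCurve.b₈]
    ring
  rw [hΔfac] at hΔ
  have hα : α ≠ 0 := fun h => hΔ (by rw [h]; ring)
  have hα1 : α - 1 ≠ 0 := fun h => hΔ (by rw [show α = 1 by linarith]; ring)
  set b : ℚ := α ^ 3 - α ^ 2 with hbdef
  set c : ℚ := α ^ 2 - α with hcdef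
  have hb : b ≠ 0 := by
    have : b = α ^ 2 * (α - 1) := by rw [hbdef]; ring
    rw [this]; exact mul_ne_zero (pow_ne_zero 2 hα) hα1
  have hc : c ≠ 0 := by
    have : c = α * (α - 1) := by rw [hcdef]; ring
    rw [this]; exact mul_ne_zero hα hα1
  have ha1 : W.a₁ = 1 - c := rfl
  have ha2 : W.a₂ = -b := rfl
  have ha3 : W.a₃ = -b := rfl
  have ha4 : W.a₄ = 0 := rfl
  have ha6 : W.a₆ = 0 := rfl
  -- nonsingularity of the four points
  have hP : W.Nonsingular 0 0 := by
    rw [WeierstrassCurve.Affine.nonsingular_iff, WeierstrassCurve.Affine.equation_iff,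
      ha1, ha2, ha3, ha4, ha6]
    refine ⟨by ring, Or.inr ?_⟩
    intro h
    exact hb (by linarith)
  have h2 : W.Nonsingular b (b * c) := by
    rw [WeierstrassCurve.Affine.nonsingular_iff, WeierstrassCurve.Affine.equation_iff,
      ha1, ha2, ha3, ha4, ha6]
    refine ⟨by ring, Or.inr ?_⟩
    intro h
    exact mul_ne_zero hb hc (by linarith)
  have h3 : W.Nonsingular c (b - c) := by
    rw [WeierstrassCurve.Affine.nonsingular_iff, WeierstrassCurve.Affine.equation_iff,
      ha1, ha2, ha3, ha4, ha6]
    constructor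
    · rw [hbdef, hcdef]; ring
    · refine Or.inr fun h => ?_
      have h' : α * (α - 1) ^ 3 = 0 := by rw [hbdef, hcdef] at h; nlinarith [h]
      exact mul_ne_zero hα (pow_ne_zero 3 hα1) h'
  have h4 : W.Nonsingular c (c ^ 2) := by
    rw [WeierstrassCurve.Affine.nonsingular_iff, WeierstrassCurve.Affine.equation_iff,
      ha1, ha2, ha3, ha4, ha6]
    constructor
    · rw [hbdef, hcdef]; ring
    · refine Or.inr fun h => ?_
      have h' : α * (α - 1) ^ 3 = 0 := by rw [hbdef, hcdef] at h; nlinarith [h]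
      exact mul_ne_zero hα (pow_ne_zero 3 hα1) h'
  -- negY computations
  have hnegY : ∀ x y : ℚ, W.negY x y = -y - (1 - c) * x + b := by
    intro x y; rw [WeierstrassCurve.Affine.negY, ha1, ha3]; ring
  -- doubling P : slope, coordinates
  have hyP : (0 : ℚ) ≠ W.negY 0 0 := by
    rw [hnegY]; intro h; exact hb (by linarith)
  have e2 : WeierstrassCurve.Affine.Point.some _ _ hP + WeierstrassCurve.Affine.Point.some _ _ hP = WeierstrassCurve.Affine.Point.some _ _ h2 := by
    rw [WeierstrassCurve.Affine.Point.add_self_of_Y_ne hyP]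
    have hs : W.slope 0 0 0 0 = 0 := by
      rw [WeierstrassCurve.Affine.slope_of_Y_ne rfl hyP, ha2, ha4, ha1]
      ring
    refine TateAux.some_congr _ _ ?_ ?_
    · rw [WeierstrassCurve.Affine.addX, hs, ha1, ha2]; ring
    · rw [WeierstrassCurve.Affine.addY, hnegY, WeierstrassCurve.Affine.negAddY,
        WeierstrassCurve.Affine.addX, hs, ha1, ha2]
      ring
  -- 3P = 2P + P
  have hx21 : b ≠ (0 : ℚ) := hb
  have e3 : WeierstrassCurve.Affine.Point.some _ _ h2 + WeierstrassCurve.Affine.Point.some _ _ hP = WeierstrassCurve.Affine.Point.some _ _ h3 := by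
    rw [WeierstrassCurve.Affine.Point.add_of_X_ne hx21]
    have hs : W.slope b 0 (b * c) 0 = c := by
      rw [WeierstrassCurve.Affine.slope_of_X_ne hx21]
      field_simp
      ring
    refine TateAux.some_congr _ _ ?_ ?_
    · rw [WeierstrassCurve.Affine.addX, hs, ha1, ha2]; ring
    · rw [WeierstrassCurve.Affine.addY, hnegY, WeierstrassCurve.Affine.negAddY,
        WeierstrassCurve.Affine.addX, hs, ha1, ha2]
      ring
  -- 4P = 2P + 2P
  have hy2 : b * c ≠ W.negY b (b * c) := by
    rw [hnegY]
    intro h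
    exact mul_ne_zero hb hc (by linarith)
  have e4 : WeierstrassCurve.Affine.Point.some _ _ h2 + WeierstrassCurve.Affine.Point.some _ _ h2 = WeierstrassCurve.Affine.Point.some _ _ h4 := by
    rw [WeierstrassCurve.Affine.Point.add_self_of_Y_ne hy2]
    have hs : W.slope b b (b * c) (b * c) = (b - c + c ^ 2) / c := by
      rw [WeierstrassCurve.Affine.slope_of_Y_ne rfl hy2, hnegY, ha1, ha2, ha4]
      rw [div_eq_div_iff (by intro h; exact mul_ne_zero hb hc (by linarith)) hc]
      ring
    refine TateAux.some_congr _ _ ?_ ?_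
    · rw [WeierstrassCurve.Affine.addX, hs, ha1, ha2]
      field_simp
      ring
    · rw [WeierstrassCurve.Affine.addY, hnegY, WeierstrassCurve.Affine.negAddY,
        WeierstrassCurve.Affine.addX, hs, ha1, ha2]
      field_simp
      ring
  -- 3P + 4P = 0
  have e34 : WeierstrassCurve.Affine.Point.some _ _ h3 + WeierstrassCurve.Affine.Point.some _ _ h4 = 0 := by
    refine WeierstrassCurve.Affine.Point.add_of_Y_eq rfl ?_
    rw [hnegY]; ring
  refine ⟨hP, ?_⟩
  haveI : Fact (Nat.Prime 7) := ⟨by norm_num⟩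
  refine addOrderOf_eq_prime ?_ (WeierstrassCurve.Affine.Point.some_ne_zero hP)
  set P := WeierstrassCurve.Affine.Point.some _ _ hP with hPdef
  have h7 : (7 : ℕ) • P = ((P + P) + P) + ((P + P) + (P + P)) := by abel
  rw [h7, e2, e3, e4, e34]
end

section
/- If an elliptic curve E over ℚ has a rational point of order 5, then E is isomorphic over ℚ to a curve of the form Y² + (1−α)XY − αY = X³ − αX² for some α ∈ ℚ. -/
open WeierstrassCurve WeierstrassCurve.Affine

/-- If an elliptic curve over `ℚ` has a rational point of order 5, then it is related,
by an admissible change of Weierstrass coordinates over `ℚ`, to the Tate normal form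
`Y² + (1−α)XY − αY = X³ − αX²` for some `α ∈ ℚ`. -/
theorem tate_normal_form_of_order_five (W : WeierstrassCurve.Affine ℚ) (hΔ : W.Δ ≠ 0)
    (h5 : ∃ P : W.Point, addOrderOf P = 5) :
    ∃ (α : ℚ) (C : WeierstrassCurve.VariableChange ℚ),
      (C • W : WeierstrassCurve ℚ) =
        { a₁ := 1 - α, a₂ := -α, a₃ := -α, a₄ := 0, a₆ := 0 } := by
  obtain ⟨P, hP⟩ := h5
  have hdvd : ∀ n : ℕ, n • P = 0 ↔ (5 : ℕ) ∣ n := by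
    intro n
    rw [← hP, ← addOrderOf_dvd_iff_nsmul_eq_zero]
  induction P with
  | zero =>
      rw [← Point.zero_def, addOrderOf_zero] at hP
      norm_num at hP
  | @some x₀ y₀ h₀ =>
      -- 2P ≠ 0, hence tangent at P is not vertical
      have hy : y₀ ≠ W.negY x₀ y₀ := by
        intro h
        have h2 : (2 : ℕ) • Point.some _ _ h₀ = 0 := by
          rw [two_nsmul]; exact Point.add_of_Y_eq rfl h
        rw [hdvd] at h2; norm_num at h2
      have h2pf := nonsingular_add h₀ h₀ fun h => hy h.2
      have h2P : Point.some _ _ h₀ + Point.some _ _ h₀ = Point.some _ _ h2pf :=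
        Point.add_self_of_Y_ne hy
      -- x-coordinates of P and 2P differ
      have hxne : x₀ ≠ W.addX x₀ x₀ (W.slope x₀ x₀ y₀ y₀) := by
        intro hx
        rcases Y_eq_of_X_eq h₀.left h2pf.left hx with h | h
        · -- then P = 2P, so P = 0, impossible
          have hP2P : Point.some _ _ h₀ + (- Point.some _ _ h2pf) = 0 :=
            Point.add_of_Y_eq hx (by rw [negY_negY]; exact h)
          have heqP : Point.some _ _ h₀ = Point.some _ _ h2pf := by
            rwa [add_neg_eq_zero] at hP2P
          rw [← h2P] at heqP
          have h0 : Point.some _ _ h₀ = 0 := by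
            have := heqP.symm
            rwa [add_eq_left] at this
          exact Point.some_ne_zero h₀ h0
        · -- then 3P = 0, impossible
          have h3 : (3 : ℕ) • Point.some _ _ h₀ = 0 := by
            have h30 : Point.some _ _ h₀ + Point.some _ _ h2pf = 0 := Point.add_of_Y_eq hx h
            rw [← h2P] at h30
            rw [show (3 : ℕ) • Point.some _ _ h₀ =
              Point.some _ _ h₀ + (Point.some _ _ h₀ + Point.some _ _ h₀) by abel]
            exact h30
          rw [hdvd] at h3; norm_num at h3
      have h3pf := nonsingular_add h₀ h2pf fun h => (hxne h.1).elim
      have h3P : Point.some _ _ h₀ + Point.some _ _ h2pf = Point.some _ _ h3pf :=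
        Point.add_of_X_ne hxne
      -- 5P = 0 gives 3P = -2P
      have h5' : (5 : ℕ) • Point.some _ _ h₀ = 0 := (hdvd 5).mpr dvd_rfl
      have hkey : Point.some _ _ h3pf = - Point.some _ _ h2pf := by
        have hsum : (Point.some _ _ h₀ + (Point.some _ _ h₀ + Point.some _ _ h₀))
            + (Point.some _ _ h₀ + Point.some _ _ h₀) = 0 := by
          rw [show (Point.some _ _ h₀ + (Point.some _ _ h₀ + Point.some _ _ h₀))
              + (Point.some _ _ h₀ + Point.some _ _ h₀) = (5 : ℕ) • Point.some _ _ h₀ by abel]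
          exact h5'
        rw [h2P, h3P] at hsum
        exact eq_neg_of_add_eq_zero_left hsum
      rw [Point.neg_some, Point.some.injEq] at hkey
      have hx3 := hkey.1
      clear hkey
      -- extract scalar equations
      have hdne : y₀ - W.negY x₀ y₀ ≠ 0 := sub_ne_zero_of_ne hy
      have hxd : x₀ - W.addX x₀ x₀ (W.slope x₀ x₀ y₀ y₀) ≠ 0 := sub_ne_zero_of_ne hxne
      have hld : W.slope x₀ x₀ y₀ y₀ * (y₀ - W.negY x₀ y₀)
          = 3 * x₀ ^ 2 + 2 * W.a₂ * x₀ + W.a₄ - W.a₁ * y₀ := by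
        rw [slope_of_Y_ne rfl hy, div_mul_cancel₀ _ hdne]
      have hmm : W.slope x₀ (W.addX x₀ x₀ (W.slope x₀ x₀ y₀ y₀)) y₀
            (W.addY x₀ x₀ y₀ (W.slope x₀ x₀ y₀ y₀))
            * (x₀ - W.addX x₀ x₀ (W.slope x₀ x₀ y₀ y₀))
          = y₀ - W.addY x₀ x₀ y₀ (W.slope x₀ x₀ y₀ y₀) := by
        rw [slope_of_X_ne hxne, div_mul_cancel₀ _ hxd]
      have heq : y₀ ^ 2 + W.a₁ * x₀ * y₀ + W.a₃ * y₀
          = x₀ ^ 3 + W.a₂ * x₀ ^ 2 + W.a₄ * x₀ + W.a₆ := (W.equation_iff x₀ y₀).mp h₀.left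
      clear hdvd h5' h3P h2P h3pf h2pf hP
      set l : ℚ := W.slope x₀ x₀ y₀ y₀ with hl_def
      set m : ℚ := W.slope x₀ (W.addX x₀ x₀ l) y₀ (W.addY x₀ x₀ y₀ l) with hm_def
      clear_value m
      clear_value l
      simp only [addX, addY, negAddY, negY] at hx3 hmm hld hdne hxd
      -- the three coefficients after translating P to the origin and killing a₄
      set A1 : ℚ := W.a₁ + 2 * l with hA1
      set A2 : ℚ := W.a₂ - l * W.a₁ + 3 * x₀ - l ^ 2 with hA2
      set A3 : ℚ := W.a₃ + x₀ * W.a₁ + 2 * y₀ with hA3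
      have hA2ne : A2 ≠ 0 := by
        intro h
        apply hxd
        rw [hA2] at h
        linarith
      have hA3ne : A3 ≠ 0 := by
        intro h
        apply hdne
        rw [hA3] at h
        linarith
      -- the order-5 relation
      have hR : A1 * A2 * A3 = A2 ^ 3 + A3 ^ 2 := by
        rw [hA1, hA2, hA3]
        linear_combination
          ((W.a₃ + x₀ * W.a₁ + 2 * y₀) + m * (W.a₂ - l * W.a₁ + 3 * x₀ - l ^ 2)
            + (W.a₁ + l) * (W.a₂ - l * W.a₁ + 3 * x₀ - l ^ 2)
            - (W.a₁ + 2 * l) * (W.a₂ - l * W.a₁ + 3 * x₀ - l ^ 2)) * hmm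
          - (W.a₂ - l * W.a₁ + 3 * x₀ - l ^ 2) ^ 2 * hx3
      refine ⟨-(A2 ^ 3 / A3 ^ 2),
        (VariableChange.mk (Units.mk0 (A3 / A2) (div_ne_zero hA3ne hA2ne)) 0 0 0) *
          ⟨1, x₀, l, y₀⟩, ?_⟩
      rw [mul_smul]
      have hW1 : ((⟨1, x₀, l, y₀⟩ : VariableChange ℚ) • W : WeierstrassCurve ℚ) =
          ({ a₁ := A1, a₂ := A2, a₃ := A3, a₄ := 0, a₆ := 0 } : WeierstrassCurve ℚ) := by
        ext <;>
          simp only [variableChange_a₁, variableChange_a₂, variableChange_a₃,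
            variableChange_a₄, variableChange_a₆, inv_one, Units.val_one, one_pow, one_mul]
        · rfl
        · rfl
        · rfl
        · linear_combination -hld
        · linear_combination -heq
      rw [hW1]
      ext <;>
        simp only [variableChange_a₁, variableChange_a₂, variableChange_a₃,
          variableChange_a₄, variableChange_a₆, Units.val_inv_eq_inv_val, Units.val_mk0,
          inv_div]
      · field_simp
        linear_combination hR
      · field_simp
        ring
      · field_simp
        ring
      · ring
      · ring
end

section
/- The elliptic curve E: Y² = X³ + 12933X − 2285226 over ℚ has the point (123, 1080) on it, and this point has order exactly 5. -/
open WeierstrassCurve.Affine WeierstrassCurve.Affine.Point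

private lemma some_eq_some {F : Type*} [Field F] {W : WeierstrassCurve.Affine F}
    {x y x' y' : F} {h : W.Nonsingular x y} (hx : x = x') (hy : y = y') :
    ∃ h' : W.Nonsingular x' y', Point.some _ _ h = Point.some _ _ h' := by
  subst hx; subst hy; exact ⟨h, rfl⟩

/-- The curve `Y² = X³ + 12933X − 2285226` (curve 110A1) contains the point
`(123, 1080)`, which has order exactly 5. -/
theorem curve_110A1_point_order_five
    (W : WeierstrassCurve.Affine ℚ)
    (hW : W = { a₁ := 0, a₂ := 0, a₃ := 0, a₄ := 12933, a₆ := -2285226 }) :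
    ∃ h : W.Nonsingular 123 1080,
      addOrderOf (WeierstrassCurve.Affine.Point.some _ _ h) = 5 := by
  subst hW
  set W : WeierstrassCurve.Affine ℚ :=
    { a₁ := 0, a₂ := 0, a₃ := 0, a₄ := 12933, a₆ := -2285226 } with hW
  have hP : W.Nonsingular 123 1080 := by
    rw [nonsingular_iff]
    constructor
    · rw [equation_iff]; norm_num [hW]
    · left; norm_num [hW]
  refine ⟨hP, ?_⟩
  set P : W.Point := Point.some _ _ hP with hPdef
  -- doubling: 2P = (483, -10800)
  have hy1 : (1080 : ℚ) ≠ W.negY 123 1080 := by norm_num [negY, hW]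
  have slope1 : W.slope 123 123 1080 1080 = 27 := by
    rw [slope_of_Y_ne rfl hy1]; norm_num [negY, hW]
  have e2 := add_of_Y_ne (h₁ := hP) (h₂ := hP) hy1
  obtain ⟨h2, he2⟩ := some_eq_some (W := W)
      (show W.addX 123 123 (W.slope 123 123 1080 1080) = 483 by
        rw [slope1]; norm_num [addX, hW])
      (show W.addY 123 123 1080 (W.slope 123 123 1080 1080) = -10800 by
        rw [slope1, addY, negAddY, negY, addX]; norm_num [hW])
  have h2P : P + P = Point.some _ _ h2 := by rw [hPdef, e2, he2]
  -- 4P = 2P + 2P = (123, -1080)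
  have hy2 : (-10800 : ℚ) ≠ W.negY 483 (-10800) := by norm_num [negY, hW]
  have slope2 : W.slope 483 483 (-10800) (-10800) = -33 := by
    rw [slope_of_Y_ne rfl hy2]; norm_num [negY, hW]
  have e4 := add_of_Y_ne (h₁ := h2) (h₂ := h2) hy2
  obtain ⟨h4, he4⟩ := some_eq_some (W := W)
      (show W.addX 483 483 (W.slope 483 483 (-10800) (-10800)) = 123 by
        rw [slope2]; norm_num [addX, hW])
      (show W.addY 483 483 (-10800) (W.slope 483 483 (-10800) (-10800)) = -1080 by
        rw [slope2, addY, negAddY, negY, addX]; norm_num [hW])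
  have h4P : Point.some _ _ h2 + Point.some _ _ h2 = Point.some _ _ h4 := by rw [e4, he4]
  -- 4P + P = 0
  have h5P : Point.some _ _ h4 + P = 0 := by
    rw [hPdef]
    exact add_of_Y_eq rfl (by norm_num [negY, hW])
  have hfive : (5 : ℕ) • P = 0 := by
    have : (5 : ℕ) • P = P + P + (P + P) + P := by
      rw [show (5 : ℕ) = 2 + 2 + 1 by norm_num]
      rw [add_nsmul, add_nsmul, one_nsmul, two_nsmul]
    rw [this, h2P, h4P, h5P]
  haveI : Fact (Nat.Prime 5) := ⟨by norm_num⟩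
  have hne : P ≠ 0 := by rw [hPdef]; exact fun h => by cases h
  exact addOrderOf_eq_prime hfive hne
end

section
/- The torsion subgroup of the elliptic curve E: Y² = X³ + X over ℚ is cyclic of order 2, generated by (0, 0). -/
/-- Fermat-descent lemma: the only rational point on `y² = x³ + x` is `(0, 0)`. -/
lemma X3_plus_X_key (x y : ℚ) (h : y ^ 2 = x ^ 3 + x) : x = 0 ∧ y = 0 := by
  suffices hx : x = 0 by
    refine ⟨hx, ?_⟩
    rw [hx] at h
    norm_num at h
    exact h
  by_contra hx
  -- x must be positive
  have hxpos : 0 < x := by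
    rcases lt_or_gt_of_ne hx with h1 | h1
    · nlinarith [sq_nonneg y, sq_nonneg x]
    · exact h1
  set a : ℤ := x.num with ha
  set b : ℤ := (x.den : ℤ) with hb
  set p : ℤ := y.num with hp
  set q : ℤ := (y.den : ℤ) with hq
  have hb0 : 0 < b := Int.natCast_pos.mpr x.pos
  have hq0 : 0 < q := Int.natCast_pos.mpr y.pos
  have ha0 : 0 < a := Rat.num_pos.mpr hxpos
  have hab : IsCoprime a b := by
    rw [Int.isCoprime_iff_gcd_eq_one]
    exact_mod_cast x.reduced
  have hpq : IsCoprime q p := by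
    rw [Int.isCoprime_iff_gcd_eq_one, Int.gcd_comm]
    exact_mod_cast y.reduced
  -- the integral equation
  have hZ : p ^ 2 * b ^ 3 = q ^ 2 * (a * (a ^ 2 + b ^ 2)) := by
    have hxq : (x : ℚ) = (a : ℚ) / (b : ℚ) := by exact_mod_cast (Rat.num_div_den x).symm
    have hyq : (y : ℚ) = (p : ℚ) / (q : ℚ) := by exact_mod_cast (Rat.num_div_den y).symm
    have hbQ : (b : ℚ) ≠ 0 := by positivity
    have hqQ : (q : ℚ) ≠ 0 := by positivity
    have : (p : ℚ) ^ 2 * b ^ 3 = q ^ 2 * (a * (a ^ 2 + b ^ 2)) := by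
      rw [hxq, hyq] at h
      field_simp at h
      apply mul_left_cancel₀ hbQ
      linear_combination (b : ℚ) * h
    exact_mod_cast this
  -- coprimality facts
  have hba : IsCoprime b a := hab.symm
  have hbM : IsCoprime b (a * (a ^ 2 + b ^ 2)) := by
    refine hba.mul_right ?_
    have h1 : IsCoprime b (a ^ 2) := hba.pow_right
    have h2 := h1.add_mul_left_right b
    have h3 : a ^ 2 + b * b = a ^ 2 + b ^ 2 := by ring
    rwa [h3] at h2
  have hb3q2 : b ^ 3 ∣ q ^ 2 := by
    have hd : b ^ 3 ∣ q ^ 2 * (a * (a ^ 2 + b ^ 2)) := ⟨p ^ 2, by linear_combination -hZ⟩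
    exact hbM.pow_left.dvd_of_dvd_mul_right hd
  have hq2b3 : q ^ 2 ∣ b ^ 3 := by
    have hd : q ^ 2 ∣ p ^ 2 * b ^ 3 := ⟨a * (a ^ 2 + b ^ 2), hZ⟩
    exact hpq.pow.dvd_of_dvd_mul_left hd
  have hqb : q ^ 2 = b ^ 3 :=
    Int.dvd_antisymm (by positivity) (by positivity) hq2b3 hb3q2
  have hP : p ^ 2 = a * (a ^ 2 + b ^ 2) := by
    have hb3 : (b : ℤ) ^ 3 ≠ 0 := by positivity
    apply mul_right_cancel₀ hb3
    rw [hZ, hqb]; ring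
  -- b is a perfect square
  have hbq : b ∣ q := by
    have hdvd : b ^ 2 ∣ q ^ 2 := hqb ▸ ⟨b, by ring⟩
    exact (Int.pow_dvd_pow_iff two_ne_zero).mp hdvd
  obtain ⟨c, hc⟩ := hbq
  have hbc : b = c ^ 2 := by
    have hb2 : (b : ℤ) ^ 2 ≠ 0 := by positivity
    apply mul_left_cancel₀ hb2
    rw [hc] at hqb
    linear_combination (-1 : ℤ) * hqb
  have hc0 : c ≠ 0 := by rintro rfl; rw [hbc] at hb0; norm_num at hb0
  -- a is a perfect square
  have haM : IsCoprime a (a ^ 2 + b ^ 2) := by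
    have h1 : IsCoprime a (b ^ 2) := hab.pow_right
    have h2 := h1.add_mul_left_right a
    have h3 : b ^ 2 + a * a = a ^ 2 + b ^ 2 := by ring
    rwa [h3] at h2
  obtain ⟨d, hd⟩ := Int.sq_of_isCoprime haM hP.symm
  have had : a = d ^ 2 := by
    rcases hd with h' | h'
    · exact h'
    · nlinarith [sq_nonneg d]
  have hd0 : d ≠ 0 := by rintro rfl; rw [had] at ha0; norm_num at ha0
  have hdp : d ∣ p := by
    have hdvd : d ^ 2 ∣ p ^ 2 := ⟨a ^ 2 + b ^ 2, by rw [hP, had]⟩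
    exact (Int.pow_dvd_pow_iff two_ne_zero).mp hdvd
  obtain ⟨e, he⟩ := hdp
  have hfer : d ^ 4 + c ^ 4 = e ^ 2 := by
    have hd2 : (d : ℤ) ^ 2 ≠ 0 := pow_ne_zero _ hd0
    apply mul_left_cancel₀ hd2
    have key : (d * e) ^ 2 = d ^ 2 * (d ^ 4 + c ^ 4) := by
      rw [← he, hP, had, hbc]; ring
    linear_combination -key
  exact not_fermat_42 hd0 hc0 hfer

open WeierstrassCurve.Affine in
/-- The torsion subgroup of `Y² = X³ + X` over `ℚ` is cyclic of order 2, generated by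
the point `(0, 0)`. -/
theorem torsion_of_X3_plus_X
    (W : WeierstrassCurve.Affine ℚ)
    (hW : W = { a₁ := 0, a₂ := 0, a₃ := 0, a₄ := 1, a₆ := 0 }) :
    ∃ h : W.Nonsingular 0 0,
      addOrderOf (WeierstrassCurve.Affine.Point.some 0 0 h) = 2 ∧
      AddCommGroup.torsion W.Point =
        AddSubgroup.zmultiples (WeierstrassCurve.Affine.Point.some 0 0 h) := by
  subst hW
  set W : WeierstrassCurve.Affine ℚ := { a₁ := 0, a₂ := 0, a₃ := 0, a₄ := 1, a₆ := 0 } with hWdef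
  have hns : W.Nonsingular 0 0 := by
    rw [nonsingular_iff, equation_iff]
    norm_num [hWdef]
  have hyneg : (0 : ℚ) = W.negY 0 0 := by simp [negY, hWdef]
  have h2 : Point.some 0 0 hns + Point.some 0 0 hns = 0 := Point.add_self_of_Y_eq hyneg
  have hne : Point.some 0 0 hns ≠ 0 := Point.some_ne_zero hns
  have hall : ∀ z : W.Point, z = 0 ∨ z = Point.some 0 0 hns := by
    rintro (_ | @⟨x, y, hz⟩)
    · left; rfl
    · right
      have heq := hz.left
      rw [equation_iff] at heq
      have heq' : y ^ 2 = x ^ 3 + x := by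
        simpa [hWdef] using heq
      obtain ⟨hx, hy⟩ := X3_plus_X_key x y heq'
      subst hx; subst hy
      rfl
  haveI : Fact (Nat.Prime 2) := ⟨Nat.prime_two⟩
  refine ⟨hns, ?_, ?_⟩
  · exact addOrderOf_eq_prime (by rw [two_nsmul]; exact h2) hne
  · ext z
    rw [AddCommGroup.mem_torsion]
    constructor
    · intro _
      rcases hall z with rfl | rfl
      · exact zero_mem _
      · exact AddSubgroup.mem_zmultiples _
    · intro _
      rcases hall z with rfl | rfl
      · exact IsOfFinAddOrder.zero
      · exact isOfFinAddOrder_iff_nsmul_eq_zero.mpr ⟨2, two_pos, by rw [two_nsmul]; exact h2⟩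
end

section
/- For the elliptic curve E: Y² = X³ + X, and every odd prime p not dividing 4 (i.e. every odd prime p), the order of the group E(𝔽_p) is divisible by 4. -/
open WeierstrassCurve Affine WeierstrassCurve.Affine.Point

section Aux

variable {F : Type*} [Field F] {W : WeierstrassCurve.Affine F}

lemma my_some_congr {x₁ y₁ x₂ y₂ : F} (h₁ : W.Nonsingular x₁ y₁) (h₂ : W.Nonsingular x₂ y₂)
    (hx : x₁ = x₂) (hy : y₁ = y₂) :
    WeierstrassCurve.Affine.Point.some _ _ h₁ = WeierstrassCurve.Affine.Point.some _ _ h₂ := by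
  subst hx; subst hy; rfl

end Aux

/-- For every odd prime `p`, the number of points of `Y² = X³ + X` over `𝔽_p`
(including the point at infinity) is divisible by 4. -/
theorem card_X3_plus_X_mod_p (p : ℕ) [Fact (Nat.Prime p)] (hodd : p ≠ 2)
    (Wp : WeierstrassCurve.Affine (ZMod p))
    (hWp : Wp = { a₁ := 0, a₂ := 0, a₃ := 0, a₄ := 1, a₆ := 0 }) :
    4 ∣ Nat.card Wp.Point := by
  subst hWp
  set W : WeierstrassCurve.Affine (ZMod p) :=
    { a₁ := 0, a₂ := 0, a₃ := 0, a₄ := 1, a₆ := 0 } with hW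
  have hp : p.Prime := Fact.out
  have h2 : (2 : ZMod p) ≠ 0 := by
    have : ((2 : ℕ) : ZMod p) ≠ 0 := by
      rw [Ne, ZMod.natCast_eq_zero_iff]
      intro h
      exact hodd ((Nat.prime_dvd_prime_iff_eq hp Nat.prime_two).mp h)
    simpa using this
  have hm1 : (-1 : ZMod p) ≠ 0 := by
    intro h
    exact one_ne_zero (by linear_combination -h : (1 : ZMod p) = 0)
  -- the 2-torsion point (0,0)
  have hP : W.Nonsingular 0 0 := by
    rw [nonsingular_iff, equation_iff]
    refine ⟨by norm_num [hW], Or.inl ?_⟩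
    norm_num [hW]
  have hPP : (some _ _ hP : W.Point) + some _ _ hP = 0 := by
    apply add_of_Y_eq rfl
    simp [negY, hW]
  by_cases h4 : p % 4 = 3
  · -- p ≡ 3 mod 4 : there is a point of order 4
    -- first: 2 or -2 is a square
    have hsq : IsSquare (2 : ZMod p) ∨ IsSquare (-2 : ZMod p) := by
      by_contra hcon
      push_neg at hcon
      obtain ⟨hs2, hsn2⟩ := hcon
      have hc2 : quadraticChar (ZMod p) 2 = -1 :=
        quadraticChar_neg_one_iff_not_isSquare.mpr hs2
      have hcn2 : quadraticChar (ZMod p) (-2) = -1 :=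
        quadraticChar_neg_one_iff_not_isSquare.mpr hsn2
      have hne : (-4 : ZMod p) ≠ 0 := by
        intro h
        have h22 : (2 : ZMod p) * 2 = 0 := by linear_combination -h
        exact h2 ((mul_eq_zero.mp h22).resolve_left h2)
      have hval : quadraticChar (ZMod p) (-4) = 1 := by
        have : (-4 : ZMod p) = 2 * (-2) := by ring
        rw [this, map_mul, hc2, hcn2]; ring
      have hsq4 : IsSquare (-4 : ZMod p) := (quadraticChar_one_iff_isSquare hne).mp hval
      obtain ⟨c, hc⟩ := hsq4
      have : IsSquare (-1 : ZMod p) := by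
        refine ⟨c / 2, ?_⟩
        field_simp
        linear_combination hc
      exact (ZMod.exists_sq_eq_neg_one_iff.mp this) h4
    -- get x with x² = 1 and y with y² = 2x
    obtain ⟨x, y, hx2, hyy⟩ :
        ∃ x y : ZMod p, x ^ 2 = 1 ∧ y * y = 2 * x := by
      rcases hsq with ⟨y, hy⟩ | ⟨y, hy⟩
      · exact ⟨1, y, by norm_num, by rw [← hy]; ring⟩
      · exact ⟨-1, y, by norm_num, by rw [← hy]; ring⟩
    have hx0 : x ≠ 0 := fun h => one_ne_zero (by rw [← hx2, h]; ring)
    have hy0 : y ≠ 0 := by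
      intro h
      apply hx0
      have h2x : (2 : ZMod p) * x = 0 := by rw [← hyy, h]; ring
      exact (mul_eq_zero.mp h2x).resolve_left h2
    have hR : W.Nonsingular x y := by
      rw [nonsingular_iff, equation_iff]
      constructor
      · simp only [hW]
        linear_combination hyy - x * hx2
      · refine Or.inr fun h => hy0 ?_
        simp only [hW] at h
        have : (2 : ZMod p) * y = 0 := by linear_combination h
        exact (mul_eq_zero.mp this).resolve_left h2
    set R : W.Point := some _ _ hR with hRdef
    have hyne : y ≠ W.negY x y := by
      simp only [negY, hW]
      intro h
      have : (2 : ZMod p) * y = 0 := by linear_combination h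
      exact hy0 ((mul_eq_zero.mp this).resolve_left h2)
    have h2R : R + R = some _ _ hP := by
      rw [hRdef, add_self_of_Y_ne hyne]
      have hl : W.slope x x y y = 2 / y := by
        rw [slope_of_Y_ne rfl hyne]
        simp only [negY, hW]
        rw [div_eq_div_iff (by
          intro h
          have : (2 : ZMod p) * y = 0 := by linear_combination h
          exact hy0 ((mul_eq_zero.mp this).resolve_left h2)) hy0]
        linear_combination 3 * y * hx2
      apply my_some_congr
      · have key : (2 / y) ^ 2 = 2 * x := by
          rw [div_pow, div_eq_iff (pow_ne_zero 2 hy0)]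
          linear_combination -2 * x * hyy - 4 * hx2
        rw [addX, hl, key]
        simp only [hW]
        ring
      · have key : (2 / y) ^ 2 = 2 * x := by
          rw [div_pow, div_eq_iff (pow_ne_zero 2 hy0)]
          linear_combination -2 * x * hyy - 4 * hx2
        rw [addY, negAddY, addX, hl, key]
        simp only [negY, hW]
        field_simp
        linear_combination -y * hyy
    have e2 : (2 : ℕ) • R = some _ _ hP := by rw [two_nsmul, h2R]
    have e4 : (4 : ℕ) • R = 0 := by
      have h44 : (4 : ℕ) = 2 * 2 := rfl
      rw [h44, mul_nsmul, e2, two_nsmul, hPP]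
    have hd : addOrderOf R ∣ 4 := addOrderOf_dvd_of_nsmul_eq_zero e4
    have hd1 : addOrderOf R ≠ 1 :=
      fun h => some_ne_zero hR (AddMonoid.addOrderOf_eq_one_iff.mp h)
    have hd2 : addOrderOf R ≠ 2 := by
      intro h
      have := addOrderOf_nsmul_eq_zero R
      rw [h, e2] at this
      exact some_ne_zero hP this
    have hd4 : addOrderOf R = 4 := by
      have hle : addOrderOf R ≤ 4 := Nat.le_of_dvd (by norm_num) hd
      interval_cases h : addOrderOf R <;> omega
    calc (4 : ℕ) = addOrderOf R := hd4.symm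
      _ ∣ Nat.card W.Point := addOrderOf_dvd_natCard R
  · -- p ≡ 1 mod 4 : full 2-torsion
    obtain ⟨i, hi⟩ : IsSquare (-1 : ZMod p) := ZMod.exists_sq_eq_neg_one_iff.mpr h4
    have hii : i * i = -1 := hi.symm
    have hi0 : i ≠ 0 := by
      intro h
      exact hm1 (by rw [← hii, h]; ring)
    have hQ : W.Nonsingular i 0 := by
      rw [nonsingular_iff, equation_iff]
      constructor
      · simp only [hW]
        linear_combination -i * hii
      · refine Or.inl ?_
        simp only [hW]
        intro h
        have : (-2 : ZMod p) = 0 := by linear_combination -h - 3 * hii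
        exact h2 (by linear_combination -this)
    -- build the Klein four subgroup via an injective hom
    have hPker : (2 : ℤ) • (some _ _ hP : W.Point) = 0 := by
      rw [two_zsmul, hPP]
    have hQQ : (some _ _ hQ : W.Point) + some _ _ hQ = 0 := by
      apply add_of_Y_eq rfl
      simp [negY, hW]
    have hQker : (2 : ℤ) • (some _ _ hQ : W.Point) = 0 := by
      rw [two_zsmul, hQQ]
    set f : ZMod 2 →+ W.Point :=
      ZMod.lift 2 ⟨zmultiplesHom W.Point (some _ _ hP), by simpa using hPker⟩ with hf
    set g : ZMod 2 →+ W.Point :=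
      ZMod.lift 2 ⟨zmultiplesHom W.Point (some _ _ hQ), by simpa using hQker⟩ with hg
    have hf1 : f 1 = some _ _ hP := by
      rw [hf, show (1 : ZMod 2) = ((1 : ℤ) : ZMod 2) by norm_cast, ZMod.lift_coe]
      simp
    have hg1 : g 1 = some _ _ hQ := by
      rw [hg, show (1 : ZMod 2) = ((1 : ℤ) : ZMod 2) by norm_cast, ZMod.lift_coe]
      simp
    set φ : ZMod 2 × ZMod 2 →+ W.Point := f.coprod g with hφ
    have hPQ : (some _ _ hP : W.Point) + some _ _ hQ =
        some _ _ (nonsingular_add hP hQ (fun h => absurd h.1.symm hi0)) :=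
      add_of_X_ne (fun h => hi0 h.symm)
    have hinj : Function.Injective φ := by
      rw [injective_iff_map_eq_zero]
      intro a ha
      have hcases : ∀ x : ZMod 2, x = 0 ∨ x = 1 := by decide
      have hφa : φ a = f a.1 + g a.2 := rfl
      obtain ⟨a1, a2⟩ := a
      rcases hcases a1 with rfl | rfl <;> rcases hcases a2 with rfl | rfl
      · rfl
      · rw [hφa] at ha
        simp only [_root_.map_zero, zero_add, hg1] at ha
        exact absurd ha (some_ne_zero hQ)
      · rw [hφa] at ha
        simp only [_root_.map_zero, add_zero, hf1] at ha
        exact absurd ha (some_ne_zero hP)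
      · rw [hφa] at ha
        simp only [hf1, hg1] at ha
        rw [hPQ] at ha
        exact absurd ha (some_ne_zero _)
    have hcard := AddSubgroup.card_dvd_of_injective φ hinj
    rwa [Nat.card_prod, Nat.card_zmod] at hcard
end
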